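/- Let d < n be relatively prime positive integers and let ℓ = s(n, d) be the sum of the quotients obtained when the Euclidean algorithm is run on (n, d). Then there exists a finite poset P of width at most 2 with at most ℓ elements such that e(P) = n. -/

import Mathlib

/-- The number of linear extensions of a finite poset `P`: the number of
order-preserving bijections from `P` to the chain `Fin |P|`. -/
noncomputable def extNum (P : Type*) [instF : Fintype P] [instO : PartialOrder P] : ℕ :=
  Nat.card {f : P ≃ Fin (Fintype.card P) // ∀ x y : P, x ≤ y → f x ≤ f y}

/-- The sequence of quotients produced by the Euclidean algorithm run on `(n, d)`. -/
def euclidQuotients : ℕ → ℕ → List ℕ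
  | _, 0 => []
  | n, d + 1 => n / (d + 1) :: euclidQuotients (d + 1) (n % (d + 1))
termination_by n d => d
decreasing_by exact Nat.mod_lt _ (Nat.succ_pos d)

/-- `s(n, d)`: the sum of the quotients produced by the Euclidean algorithm on `(n, d)`. -/
def quotSum (n d : ℕ) : ℕ := (euclidQuotients n d).sum

namespace S3

def sle (σ : ℕ → ℕ) {k : ℕ} (a b : Fin k) : Prop :=
  a = b ∨ ((a:ℕ) < b ∧ σ a < b)

/-- the partial order on `Fin k` determined by a "reach" function `σ`. -/
def sord (σ : ℕ → ℕ) (k : ℕ) : PartialOrder (Fin k) where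
  le := sle σ
  lt a b := sle σ a b ∧ ¬ sle σ b a
  lt_iff_le_not_ge _ _ := Iff.rfl
  le_refl a := Or.inl rfl
  le_trans a b c hab hbc := by
    rcases hab with rfl | ⟨h1, h2⟩
    · exact hbc
    · rcases hbc with rfl | ⟨h3, h4⟩
      · exact Or.inr ⟨h1, h2⟩
      · exact Or.inr ⟨h1.trans h3, h2.trans h3⟩
  le_antisymm a b hab hba := by
    rcases hab with rfl | ⟨h1, _⟩
    · rfl
    · rcases hba with rfl | ⟨h3, _⟩
      · rfl
      · exact absurd (h1.trans h3) (lt_irrefl _)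

def IsExt (σ : ℕ → ℕ) {k : ℕ} (f : Fin k ≃ Fin k) : Prop :=
  ∀ x y : Fin k, (x:ℕ) < y → σ x < y → f x ≤ f y

noncomputable def cA (σ : ℕ → ℕ) (m : ℕ) : ℕ :=
  Nat.card {f : Fin (m+1) ≃ Fin (m+1) // IsExt σ f}

noncomputable def cB (σ : ℕ → ℕ) (m t : ℕ) : ℕ :=
  Nat.card {f : Fin (m+1) ≃ Fin (m+1) //
    IsExt σ f ∧ ∀ x : Fin (m+1), (x:ℕ) = t → (f x : ℕ) = m}

structure Inv (m : ℕ) (σ : ℕ → ℕ) (t : ℕ) : Prop where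
  self : ∀ x, x ≤ σ x
  bdd : ∀ x, x ≤ m → σ x ≤ m
  high : ∀ x, m < x → σ x = x
  w : ∀ x y, x < y → y < σ x → σ y = y
  ht : σ t = m
  tle : t ≤ m
  below : ∀ x, x < t → σ x ≤ t

/-- extend an equiv of `Fin k` to `Fin (k+1)` fixing the last element -/
def extLast {k : ℕ} (f : Fin k ≃ Fin k) : Fin (k+1) ≃ Fin (k+1) :=
  finSuccEquivLast.trans ((Equiv.optionCongr f).trans finSuccEquivLast.symm)

@[simp] lemma extLast_castSucc {k} (f : Fin k ≃ Fin k) (a : Fin k) :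
    extLast f a.castSucc = (f a).castSucc := by simp [extLast]

@[simp] lemma extLast_last {k} (f : Fin k ≃ Fin k) :
    extLast f (Fin.last k) = Fin.last k := by simp [extLast]

lemma extLast_val_lt {k} (f : Fin k ≃ Fin k) (a : Fin (k+1)) (h : (a:ℕ) < k) :
    ((extLast f a : Fin (k+1)) : ℕ) = (f ⟨(a:ℕ), h⟩ : ℕ) := by
  rcases Fin.eq_castSucc_or_eq_last a with ⟨b, rfl⟩ | rfl
  · have hb : (⟨((b.castSucc : Fin (k+1)) : ℕ), h⟩ : Fin k) = b := by apply Fin.ext; simp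
    rw [extLast_castSucc, hb]
    simp
  · simp at h

lemma extLast_val_eq {k} (f : Fin k ≃ Fin k) (a : Fin (k+1)) (h : (a:ℕ) = k) :
    ((extLast f a : Fin (k+1)) : ℕ) = k := by
  have : a = Fin.last k := by apply Fin.ext; simpa using h
  rw [this, extLast_last]; simp

/-- restrict an equiv of `Fin (k+1)` fixing the last element to `Fin k` -/
def restrictLast {k : ℕ} (f : Fin (k+1) ≃ Fin (k+1)) (hf : f (Fin.last k) = Fin.last k) :
    Fin k ≃ Fin k where
  toFun a := (f a.castSucc).castPred (by
    intro hc
    exact absurd (f.injective (hc.trans hf.symm)) (Fin.castSucc_lt_last a).ne)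
  invFun a := (f.symm a.castSucc).castPred (by
    intro hc
    have : a.castSucc = Fin.last k := by
      conv_lhs => rw [← f.apply_symm_apply a.castSucc, hc, hf]
    exact absurd this (Fin.castSucc_lt_last a).ne)
  left_inv a := by
    apply Fin.castSucc_injective
    simp [Fin.castSucc_castPred]
  right_inv a := by
    apply Fin.castSucc_injective
    simp [Fin.castSucc_castPred]

lemma restrictLast_castSucc {k : ℕ} (f : Fin (k+1) ≃ Fin (k+1))
    (hf : f (Fin.last k) = Fin.last k) (a : Fin k) :
    ((restrictLast f hf) a).castSucc = f a.castSucc := by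
  simp only [restrictLast, Equiv.coe_fn_mk]
  exact Fin.castSucc_castPred _ _

lemma extLast_restrictLast {k : ℕ} (f : Fin (k+1) ≃ Fin (k+1))
    (hf : f (Fin.last k) = Fin.last k) : extLast (restrictLast f hf) = f := by
  apply Equiv.ext
  intro a
  rcases Fin.eq_castSucc_or_eq_last a with ⟨b, rfl⟩ | rfl
  · rw [extLast_castSucc, restrictLast_castSucc]
  · rw [extLast_last, hf]


section Step

variable {m t : ℕ} {σ : ℕ → ℕ}

/-- swap of the values `m` and `m+1` in `Fin (m+2)` -/
def swTop (m : ℕ) : Fin (m+2) ≃ Fin (m+2) :=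
  Equiv.swap ⟨m, by omega⟩ (Fin.last (m+1))

lemma swTop_val (m : ℕ) (a : Fin (m+2)) :
    ((swTop m a : Fin (m+2)) : ℕ) =
      if (a:ℕ) = m then m+1 else if (a:ℕ) = m+1 then m else a := by
  rcases Nat.lt_trichotomy (a:ℕ) m with h | h | h
  · have h1 : a ≠ ⟨m, by omega⟩ := by intro hc; rw [hc] at h; simp at h
    have h2 : a ≠ Fin.last (m+1) := by
      intro hc; rw [hc] at h; simp [Fin.last] at h
    rw [swTop, Equiv.swap_apply_of_ne_of_ne h1 h2]
    rw [if_neg (by omega), if_neg (by omega)]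
  · have h1 : a = ⟨m, by omega⟩ := by apply Fin.ext; simpa using h
    rw [h1, swTop, Equiv.swap_apply_left]
    simp [Fin.last, h]
  · have h2 : (a:ℕ) = m+1 := by have := a.isLt; omega
    have h1 : a = Fin.last (m+1) := by apply Fin.ext; simpa using h2
    rw [h1, swTop, Equiv.swap_apply_right]
    simp [Fin.last]

/-- the second branch map: extend and put the new element just below `last`,
moving the image of `t` to `last`. -/
def e2 {m : ℕ} (h : Fin (m+1) ≃ Fin (m+1)) : Fin (m+2) ≃ Fin (m+2) :=
  (extLast h).trans (swTop m)

lemma e2_val_t (h : Fin (m+1) ≃ Fin (m+1)) (htle : t ≤ m)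
    (htv : (h ⟨t, by omega⟩ : ℕ) = m) (a : Fin (m+2)) (ha : (a:ℕ) = t) :
    ((e2 h a : Fin (m+2)) : ℕ) = m+1 := by
  have h1 : (a:ℕ) < m+1 := by omega
  have h2 : ((extLast h a : Fin (m+2)) : ℕ) = m := by
    rw [extLast_val_lt h a h1]
    have : (⟨(a:ℕ), h1⟩ : Fin (m+1)) = ⟨t, by omega⟩ := by apply Fin.ext; simpa using ha
    rw [this, htv]
  rw [e2, Equiv.trans_apply, swTop_val, h2, if_pos rfl]

lemma e2_val_last (h : Fin (m+1) ≃ Fin (m+1)) (a : Fin (m+2)) (ha : (a:ℕ) = m+1) :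
    ((e2 h a : Fin (m+2)) : ℕ) = m := by
  have h2 : ((extLast h a : Fin (m+2)) : ℕ) = m+1 := extLast_val_eq h a ha
  rw [e2, Equiv.trans_apply, swTop_val, h2, if_neg (by omega), if_pos rfl]

lemma e2_val_other (h : Fin (m+1) ≃ Fin (m+1)) (htle : t ≤ m)
    (htv : (h ⟨t, by omega⟩ : ℕ) = m) (a : Fin (m+2)) (ha : (a:ℕ) < m+1)
    (ha2 : (a:ℕ) ≠ t) :
    ((e2 h a : Fin (m+2)) : ℕ) = (h ⟨(a:ℕ), ha⟩ : ℕ) ∧ (h ⟨(a:ℕ), ha⟩ : ℕ) < m := by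
  have hne : (h ⟨(a:ℕ), ha⟩ : ℕ) ≠ m := by
    intro hc
    have : h ⟨(a:ℕ), ha⟩ = h ⟨t, by omega⟩ := by
      apply Fin.ext; rw [htv]; exact hc
    have := h.injective this
    rw [Fin.mk.injEq] at this
    exact ha2 this
  have hlt : (h ⟨(a:ℕ), ha⟩ : ℕ) < m := by
    have := (h ⟨(a:ℕ), ha⟩).isLt; omega
  have h2 : ((extLast h a : Fin (m+2)) : ℕ) = (h ⟨(a:ℕ), ha⟩ : ℕ) := extLast_val_lt h a ha
  constructor
  · rw [e2, Equiv.trans_apply, swTop_val, h2, if_neg (by omega), if_neg (by omega)]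
  · exact hlt

lemma isExt_extLast (hInv : Inv m σ t) (f : Fin (m+1) ≃ Fin (m+1)) (hf : IsExt σ f) :
    IsExt (Function.update σ t (m+1)) (extLast f) := by
  intro x y hxy hs
  rw [Fin.le_def]
  by_cases hy : (y:ℕ) = m+1
  · rw [extLast_val_eq f y hy]
    have := (extLast f x).isLt; omega
  · have hy' : (y:ℕ) < m+1 := by have := y.isLt; omega
    have hx' : (x:ℕ) < m+1 := lt_trans hxy hy'
    have hxt : (x:ℕ) ≠ t := by
      intro hc
      rw [Function.update_apply, if_pos hc] at hs
      omega
    rw [Function.update_apply, if_neg hxt] at hs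
    rw [extLast_val_lt f x hx', extLast_val_lt f y hy']
    exact Fin.le_def.mp (hf ⟨x, hx'⟩ ⟨y, hy'⟩ hxy hs)

lemma isExt_of_extLast (hInv : Inv m σ t) (f : Fin (m+1) ≃ Fin (m+1))
    (hf : IsExt (Function.update σ t (m+1)) (extLast f)) : IsExt σ f := by
  intro x y hxy hs
  have hxt : (x:ℕ) ≠ t := by
    intro hc
    rw [hc, hInv.ht] at hs
    have := y.isLt; omega
  have h1 : ((x.castSucc : Fin (m+2)) : ℕ) < (y.castSucc : Fin (m+2)) := by simpa using hxy
  have h2 : Function.update σ t (m+1) ((x.castSucc : Fin (m+2)) : ℕ) < ((y.castSucc : Fin (m+2)) : ℕ) := by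
    rw [Fin.coe_castSucc, Function.update_apply, if_neg hxt]
    simpa using hs
  have := hf x.castSucc y.castSucc h1 h2
  rw [extLast_castSucc, extLast_castSucc, Fin.castSucc_le_castSucc_iff] at this
  exact this

lemma isExt_e2 (htle : t ≤ m) (h : Fin (m+1) ≃ Fin (m+1)) (hh : IsExt σ h)
    (htv : (h ⟨t, by omega⟩ : ℕ) = m) :
    IsExt (Function.update σ t (m+1)) (e2 h) := by
  intro x y hxy hs
  rw [Fin.le_def]
  by_cases hyt : (y:ℕ) = t
  · rw [e2_val_t h htle htv y hyt]
    have := (e2 h x).isLt; omega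
  · by_cases hyl : (y:ℕ) = m+1
    · -- goal: e2 h x ≤ m
      rw [e2_val_last h y hyl]
      have hx' : (x:ℕ) < m+1 := by omega
      have hxt : (x:ℕ) ≠ t := by
        intro hc
        rw [Function.update_apply, if_pos hc] at hs
        omega
      have := (e2_val_other h htle htv x hx' hxt)
      omega
    · have hy' : (y:ℕ) < m+1 := by have := y.isLt; omega
      have hx' : (x:ℕ) < m+1 := by omega
      have hxt : (x:ℕ) ≠ t := by
        intro hc
        rw [Function.update_apply, if_pos hc] at hs
        omega
      rw [Function.update_apply, if_neg hxt] at hs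
      obtain ⟨hex, _⟩ := e2_val_other h htle htv x hx' hxt
      obtain ⟨hey, _⟩ := e2_val_other h htle htv y hy' hyt
      rw [hex, hey]
      exact Fin.le_def.mp (hh ⟨x, hx'⟩ ⟨y, hy'⟩ hxy hs)

lemma isExt_of_e2 (hInv : Inv m σ t) (htle : t ≤ m) (h : Fin (m+1) ≃ Fin (m+1))
    (htv : (h ⟨t, by omega⟩ : ℕ) = m)
    (hg : IsExt (Function.update σ t (m+1)) (e2 h)) : IsExt σ h := by
  intro x y hxy hs
  rw [Fin.le_def]
  by_cases hyt : (y:ℕ) = t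
  · -- h y has value m, anything ≤ m
    have : y = ⟨t, by omega⟩ := by apply Fin.ext; simpa using hyt
    rw [this, htv]
    have := (h x).isLt; omega
  · have hxt : (x:ℕ) ≠ t := by
      intro hc
      rw [hc, hInv.ht] at hs
      have := y.isLt; omega
    have h1 : ((x.castSucc : Fin (m+2)) : ℕ) < (y.castSucc : Fin (m+2)) := by simpa using hxy
    have h2 : Function.update σ t (m+1) ((x.castSucc : Fin (m+2)) : ℕ) < ((y.castSucc : Fin (m+2)) : ℕ) := by
      rw [Fin.coe_castSucc, Function.update_apply, if_neg hxt]
      simpa using hs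
    have hle := hg x.castSucc y.castSucc h1 h2
    rw [Fin.le_def] at hle
    have hcx : ((x.castSucc : Fin (m+2)) : ℕ) < m+1 := by simpa using x.isLt
    have hcy : ((y.castSucc : Fin (m+2)) : ℕ) < m+1 := by simpa using y.isLt
    obtain ⟨hex, _⟩ := e2_val_other h htle htv x.castSucc hcx (by simpa using hxt)
    obtain ⟨hey, _⟩ := e2_val_other h htle htv y.castSucc hcy (by simpa using hyt)
    rw [hex, hey] at hle
    have hx : (⟨((x.castSucc : Fin (m+2)) : ℕ), hcx⟩ : Fin (m+1)) = x := by apply Fin.ext; simp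
    have hy : (⟨((y.castSucc : Fin (m+2)) : ℕ), hcy⟩ : Fin (m+1)) = y := by apply Fin.ext; simp
    rw [hx, hy] at hle
    exact hle

lemma extLast_inj {k : ℕ} (f g : Fin k ≃ Fin k) (heq : extLast f = extLast g) : f = g := by
  apply Equiv.ext; intro a
  have hpt := Equiv.ext_iff.mp heq a.castSucc
  rw [extLast_castSucc, extLast_castSucc] at hpt
  exact Fin.castSucc_injective _ hpt

lemma e2_inj (f g : Fin (m+1) ≃ Fin (m+1)) (heq : e2 f = e2 g) : f = g := by
  apply extLast_inj
  apply Equiv.ext; intro a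
  have hpt := Equiv.ext_iff.mp heq a
  rw [e2, e2, Equiv.trans_apply, Equiv.trans_apply] at hpt
  exact (swTop m).injective hpt

lemma key_lt (hInv : Inv m σ t) (f' : Fin (m+2) ≃ Fin (m+2))
    (hf : IsExt (Function.update σ t (m+1)) f') :
    ∀ a : Fin (m+2), (a:ℕ) ≠ t → (a:ℕ) ≠ m+1 →
      (f' a : ℕ) < (f' (Fin.last (m+1)) : ℕ) := by
  intro a h1 h2
  have h3 : (a:ℕ) < m+1 := by have := a.isLt; omega
  have hle := hf a (Fin.last (m+1)) (by simpa using h3) (by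
    rw [Function.update_apply, if_neg h1]
    have := hInv.bdd a (by omega)
    simp only [Fin.val_last]
    omega)
  have hne : f' a ≠ f' (Fin.last (m+1)) := by
    intro hc
    have h4 := f'.injective hc
    rw [h4] at h3
    simp at h3
  exact lt_of_le_of_ne (Fin.le_def.mp hle) (fun hv => hne (Fin.ext hv))

lemma lower_bound (hInv : Inv m σ t) (f' : Fin (m+2) ≃ Fin (m+2))
    (hf : IsExt (Function.update σ t (m+1)) f') :
    m ≤ (f' (Fin.last (m+1)) : ℕ) := by
  classical
  have htle := hInv.tle
  have key := key_lt hInv f' hf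
  set c := (f' (Fin.last (m+1)) : ℕ) with hc
  set S : Finset (Fin (m+2)) := ({⟨t, by omega⟩, Fin.last (m+1)} : Finset (Fin (m+2)))ᶜ with hS
  have hpair : ({⟨t, by omega⟩, Fin.last (m+1)} : Finset (Fin (m+2))).card = 2 := by
    rw [Finset.card_insert_of_notMem, Finset.card_singleton]
    simp only [Finset.mem_singleton]
    intro hcon
    have := congrArg Fin.val hcon
    simp [Fin.last] at this
    omega
  have hScard : S.card = m := by
    rw [hS, Finset.card_compl, hpair]
    simp
  have hsub : S.card ≤ (Finset.range c).card := by
    apply Finset.card_le_card_of_injOn (fun a => (f' a : ℕ))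
    · intro a ha
      rw [hS, Finset.mem_coe, Finset.mem_compl, Finset.mem_insert, Finset.mem_singleton] at ha
      push_neg at ha
      rw [Finset.mem_coe, Finset.mem_range]
      apply key
      · intro hcon; exact ha.1 (by apply Fin.ext; simpa using hcon)
      · intro hcon; exact ha.2 (by apply Fin.ext; simpa [Fin.last] using hcon)
    · intro a _ b _ hab
      exact f'.injective (Fin.ext hab)
  rw [hScard, Finset.card_range] at hsub
  exact hsub

lemma top_cases (hInv : Inv m σ t) (f' : Fin (m+2) ≃ Fin (m+2))
    (hf : IsExt (Function.update σ t (m+1)) f') :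
    f' (Fin.last (m+1)) = Fin.last (m+1) ∨
      ((f' (Fin.last (m+1)) : ℕ) = m ∧
        ∀ x : Fin (m+2), (x:ℕ) = t → f' x = Fin.last (m+1)) := by
  have htle := hInv.tle
  have hlb := lower_bound hInv f' hf
  have hub := (f' (Fin.last (m+1))).isLt
  rcases Nat.lt_or_ge (f' (Fin.last (m+1)) : ℕ) (m+1) with hv | hv
  · right
    have hval : (f' (Fin.last (m+1)) : ℕ) = m := by omega
    refine ⟨hval, ?_⟩
    intro x hx
    by_contra hne
    have hxl : (x:ℕ) ≠ m+1 := by omega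
    have := key_lt hInv f' hf (f'.symm (Fin.last (m+1))) ?_ ?_
    · rw [Equiv.apply_symm_apply] at this
      simp [Fin.last] at this
      omega
    · intro hcon
      apply hne
      have : f'.symm (Fin.last (m+1)) = x := by
        apply Fin.ext; rw [hcon, hx]
      rw [← this, Equiv.apply_symm_apply]
    · intro hcon
      have h5 : f'.symm (Fin.last (m+1)) = Fin.last (m+1) := by
        apply Fin.ext; simpa [Fin.last] using hcon
      have h6 := congrArg f' h5
      rw [Equiv.apply_symm_apply] at h6
      rw [← h6] at hv
      simp [Fin.last] at hv
  · left
    apply Fin.ext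
    simp only [Fin.val_last]
    omega

lemma branch2 (hInv : Inv m σ t) (f' : Fin (m+2) ≃ Fin (m+2))
    (hf' : IsExt (Function.update σ t (m+1)) f')
    (hval : (f' (Fin.last (m+1)) : ℕ) = m)
    (hts : ∀ x : Fin (m+2), (x:ℕ) = t → f' x = Fin.last (m+1)) :
    ∃ h : Fin (m+1) ≃ Fin (m+1), IsExt σ h ∧
      (∀ x : Fin (m+1), (x:ℕ) = t → (h x : ℕ) = m) ∧ e2 h = f' := by
  have htle := hInv.tle
  have hswl : swTop m (f' (Fin.last (m+1))) = Fin.last (m+1) := by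
    have h0 : f' (Fin.last (m+1)) = ⟨m, by omega⟩ := Fin.ext (by simpa using hval)
    rw [h0]
    exact Equiv.swap_apply_left _ _
  have hg'l : (f'.trans (swTop m)) (Fin.last (m+1)) = Fin.last (m+1) := by
    rw [Equiv.trans_apply, hswl]
  set h : Fin (m+1) ≃ Fin (m+1) := restrictLast (f'.trans (swTop m)) hg'l with hh
  have hpred : ∀ x : Fin (m+1), (x:ℕ) = t → (h x : ℕ) = m := by
    intro x hx
    have h1 : (h x).castSucc = (f'.trans (swTop m)) x.castSucc := restrictLast_castSucc _ _ _
    have h2 : f' (x.castSucc : Fin (m+2)) = Fin.last (m+1) :=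
      hts x.castSucc (by simpa using hx)
    rw [Equiv.trans_apply, h2] at h1
    have h3 : swTop m (Fin.last (m+1)) = ⟨m, by omega⟩ := Equiv.swap_apply_right _ _
    rw [h3] at h1
    have := congrArg Fin.val h1
    simpa using this
  have hback : e2 h = f' := by
    rw [e2, hh, extLast_restrictLast]
    apply Equiv.ext; intro a
    rw [Equiv.trans_apply, Equiv.trans_apply]
    exact Equiv.swap_apply_self _ _ _
  exact ⟨h, isExt_of_e2 hInv htle h (hpred ⟨t, by omega⟩ rfl)
    (by rw [hback]; exact hf'), hpred, hback⟩

lemma step_A (hInv : Inv m σ t) :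
    cA (Function.update σ t (m+1)) (m+1) = cA σ m + cB σ m t := by
  classical
  have htle := hInv.tle
  have hmain :
      Nat.card ({f : Fin (m+1) ≃ Fin (m+1) // IsExt σ f} ⊕
        {f : Fin (m+1) ≃ Fin (m+1) //
          IsExt σ f ∧ ∀ x : Fin (m+1), (x:ℕ) = t → (f x : ℕ) = m}) =
      Nat.card {f : Fin (m+2) ≃ Fin (m+2) // IsExt (Function.update σ t (m+1)) f} := by
    apply Nat.card_eq_of_bijective (Sum.elim
        (fun f => ⟨extLast f.1, isExt_extLast hInv f.1 f.2⟩)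
        (fun h => ⟨e2 h.1, isExt_e2 htle h.1 h.2.1 (h.2.2 ⟨t, by omega⟩ rfl)⟩))
    constructor
    · rintro (⟨f, hf⟩ | ⟨f, hf⟩) (⟨g, hg⟩ | ⟨g, hg⟩) heq <;>
        simp only [Sum.elim_inl, Sum.elim_inr, Subtype.mk.injEq] at heq
      · exact congrArg Sum.inl (Subtype.ext (extLast_inj f g heq))
      · exfalso
        have h1 := congrArg (fun (z : Fin (m+2) ≃ Fin (m+2)) =>
          ((z (Fin.last (m+1)) : Fin (m+2)) : ℕ)) heq
        rw [extLast_val_eq f _ (by simp), e2_val_last g _ (by simp)] at h1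
        omega
      · exfalso
        have h1 := congrArg (fun (z : Fin (m+2) ≃ Fin (m+2)) =>
          ((z (Fin.last (m+1)) : Fin (m+2)) : ℕ)) heq
        rw [extLast_val_eq g _ (by simp), e2_val_last f _ (by simp)] at h1
        omega
      · exact congrArg Sum.inr (Subtype.ext (e2_inj f g heq))
    · rintro ⟨f', hf'⟩
      rcases top_cases hInv f' hf' with hcase | ⟨hval, hts⟩
      · refine ⟨Sum.inl ⟨restrictLast f' hcase, ?_⟩, ?_⟩
        · apply isExt_of_extLast hInv
          rw [extLast_restrictLast]
          exact hf'
        · simp only [Sum.elim_inl]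
          exact Subtype.ext (extLast_restrictLast f' hcase)
      · obtain ⟨h, hext, hpred, hback⟩ := branch2 hInv f' hf' hval hts
        refine ⟨Sum.inr ⟨h, hext, hpred⟩, ?_⟩
        simp only [Sum.elim_inr]
        exact Subtype.ext hback
  rw [Nat.card_sum] at hmain
  unfold cA cB
  exact hmain.symm

lemma step_Bt (hInv : Inv m σ t) :
    cB (Function.update σ t (m+1)) (m+1) t = cB σ m t := by
  classical
  have htle := hInv.tle
  have hmain :
      Nat.card {f : Fin (m+1) ≃ Fin (m+1) //
          IsExt σ f ∧ ∀ x : Fin (m+1), (x:ℕ) = t → (f x : ℕ) = m} =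
      Nat.card {f : Fin (m+2) ≃ Fin (m+2) //
          IsExt (Function.update σ t (m+1)) f ∧
            ∀ x : Fin (m+2), (x:ℕ) = t → (f x : ℕ) = m+1} := by
    apply Nat.card_eq_of_bijective (fun h =>
      ⟨e2 h.1, isExt_e2 htle h.1 h.2.1 (h.2.2 ⟨t, by omega⟩ rfl),
        fun x hx => e2_val_t h.1 htle (h.2.2 ⟨t, by omega⟩ rfl) x hx⟩)
    constructor
    · rintro ⟨f, hf⟩ ⟨g, hg⟩ heq
      simp only [Subtype.mk.injEq] at heq
      exact Subtype.ext (e2_inj f g heq)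
    · rintro ⟨f', hf', hp⟩
      have hts : ∀ x : Fin (m+2), (x:ℕ) = t → f' x = Fin.last (m+1) := by
        intro x hx
        apply Fin.ext
        rw [hp x hx]
        simp
      rcases top_cases hInv f' hf' with hcase | ⟨hval, _⟩
      · exfalso
        have h1 : f' ⟨t, by omega⟩ = Fin.last (m+1) := hts _ rfl
        have h2 := f'.injective (h1.trans hcase.symm)
        have := congrArg Fin.val h2
        simp [Fin.last] at this
        omega
      · obtain ⟨h, hext, hpred, hback⟩ := branch2 hInv f' hf' hval hts
        exact ⟨⟨h, hext, hpred⟩, Subtype.ext hback⟩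
  unfold cB
  exact hmain.symm

lemma step_Bnew (hInv : Inv m σ t) :
    cB (Function.update σ t (m+1)) (m+1) (m+1) = cA σ m := by
  classical
  have htle := hInv.tle
  have hmain :
      Nat.card {f : Fin (m+1) ≃ Fin (m+1) // IsExt σ f} =
      Nat.card {f : Fin (m+2) ≃ Fin (m+2) //
          IsExt (Function.update σ t (m+1)) f ∧
            ∀ x : Fin (m+2), (x:ℕ) = m+1 → (f x : ℕ) = m+1} := by
    apply Nat.card_eq_of_bijective (fun f =>
      ⟨extLast f.1, isExt_extLast hInv f.1 f.2, fun x hx => extLast_val_eq f.1 x hx⟩)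
    constructor
    · rintro ⟨f, hf⟩ ⟨g, hg⟩ heq
      simp only [Subtype.mk.injEq] at heq
      exact Subtype.ext (extLast_inj f g heq)
    · rintro ⟨f', hf', hp⟩
      have hcase : f' (Fin.last (m+1)) = Fin.last (m+1) := by
        apply Fin.ext
        rw [hp (Fin.last (m+1)) (by simp)]
        simp
      refine ⟨⟨restrictLast f' hcase, ?_⟩, ?_⟩
      · apply isExt_of_extLast hInv
        rw [extLast_restrictLast]
        exact hf'
      · exact Subtype.ext (extLast_restrictLast f' hcase)
  unfold cA cB
  exact hmain.symm

lemma step_Inv (hInv : Inv m σ t) : Inv (m+1) (Function.update σ t (m+1)) t := by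
  obtain ⟨hself, hbdd, hhigh, hw, hht, htle, hbelow⟩ := hInv
  constructor
  · intro x
    rw [Function.update_apply]
    split
    · omega
    · exact hself x
  · intro x hx
    rw [Function.update_apply]
    split
    · omega
    · rcases Nat.lt_or_ge m x with h | h
      · rw [hhigh x h]; omega
      · have := hbdd x h; omega
  · intro x hx
    rw [Function.update_apply, if_neg (by omega)]
    exact hhigh x (by omega)
  · intro x y hxy hys
    rw [Function.update_apply] at hys
    rw [Function.update_apply]
    by_cases hxt : x = t
    · rw [if_pos hxt] at hys
      have hyt : y ≠ t := by omega
      rw [if_neg hyt]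
      rcases Nat.lt_or_ge y m with h | h
      · exact hw x y hxy (by rw [hxt, hht]; exact h)
      · have h1 := hself y
        have h2 := hbdd y (by omega)
        omega
    · rw [if_neg hxt] at hys
      have hyt : y ≠ t := by
        intro hc
        rcases Nat.lt_or_ge x t with h | h
        · have := hbelow x h; omega
        · omega
      rw [if_neg hyt]
      exact hw x y hxy hys
  · rw [Function.update_apply, if_pos rfl]
  · omega
  · intro x hx
    rw [Function.update_apply, if_neg (by omega)]
    exact hbelow x hx

lemma retarget (hInv : Inv m σ t) : Inv m σ m := by
  obtain ⟨hself, hbdd, hhigh, hw, hht, htle, hbelow⟩ := hInv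
  refine ⟨hself, hbdd, hhigh, hw, ?_, le_refl m, fun x hx => hbdd x (by omega)⟩
  have h1 := hself m
  have h2 := hbdd m (le_refl m)
  omega

end Step

def stepP (p : ℕ × ℕ) (s : ℕ) : ℕ × ℕ := (p.1 + s * p.2, p.1 + (s-1) * p.2)

lemma block {m t : ℕ} {σ : ℕ → ℕ} (s : ℕ) (hs : 1 ≤ s) (hInv : Inv m σ t) :
    cA (Function.update σ t (m+s)) (m+s) = cA σ m + s * cB σ m t ∧
    cB (Function.update σ t (m+s)) (m+s) t = cB σ m t ∧
    cB (Function.update σ t (m+s)) (m+s) (m+s) = cA σ m + (s-1) * cB σ m t ∧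
    Inv (m+s) (Function.update σ t (m+s)) t := by
  induction s, hs using Nat.le_induction with
  | base =>
    refine ⟨?_, ?_, ?_, ?_⟩
    · rw [step_A hInv, one_mul]
    · exact step_Bt hInv
    · rw [step_Bnew hInv]; simp
    · exact step_Inv hInv
  | succ s hs ih =>
    obtain ⟨hA, hBt, hBn, hI⟩ := ih
    have e0 : m + (s+1) = (m+s)+1 := by omega
    rw [e0, show Function.update σ t ((m+s)+1)
        = Function.update (Function.update σ t (m+s)) t ((m+s)+1) from
        (Function.update_idem _ _ _).symm]
    refine ⟨?_, ?_, ?_, ?_⟩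
    · rw [step_A hI, hA, hBt]; ring
    · rw [step_Bt hI, hBt]
    · rw [step_Bnew hI, hA, Nat.add_sub_cancel]
    · exact step_Inv hI

lemma fold_lemma (L : List ℕ) (hL : ∀ s ∈ L, 1 ≤ s) :
    ∀ (m t : ℕ) (σ : ℕ → ℕ), Inv m σ t →
    ∃ σ' t', Inv (m + L.sum) σ' t' ∧
      cA σ' (m + L.sum) = (L.foldl stepP (cA σ m, cB σ m t)).1 ∧
      cB σ' (m + L.sum) t' = (L.foldl stepP (cA σ m, cB σ m t)).2 := by
  induction L with
  | nil =>
    intro m t σ h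
    exact ⟨σ, t, by simpa using h, by simp, by simp⟩
  | cons s L ih =>
    intro m t σ h
    have hs : 1 ≤ s := hL s (by simp)
    obtain ⟨hA, hBt, hBn, hI⟩ := block s hs h
    obtain ⟨σ', t', h1, h2, h3⟩ :=
      ih (fun x hx => hL x (by simp [hx])) (m+s) (m+s) _ (retarget hI)
    have hinit : (cA (Function.update σ t (m+s)) (m+s),
        cB (Function.update σ t (m+s)) (m+s) (m+s)) = stepP (cA σ m, cB σ m t) s := by
      rw [hA, hBn]; rfl
    have hsum : m + (s :: L).sum = (m+s) + L.sum := by simp; omega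
    refine ⟨σ', t', by rwa [hsum], ?_, ?_⟩
    · rw [hsum, h2, List.foldl_cons, ← hinit]
    · rw [hsum, h3, List.foldl_cons, ← hinit]

lemma final_A {m t : ℕ} {σ : ℕ → ℕ} (hInv : Inv m σ t) (s : ℕ) :
    cA (Function.update σ t (m+s)) (m+s) = cA σ m + s * cB σ m t ∧
    (∀ x y, x < y → y < Function.update σ t (m+s) x → Function.update σ t (m+s) y = y) := by
  rcases Nat.eq_zero_or_pos s with rfl | hs
  · have hupd : Function.update σ t (m+0) = σ := by
      rw [Nat.add_zero, ← hInv.ht]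
      exact Function.update_eq_self t σ
    rw [hupd]
    exact ⟨by simp, hInv.w⟩
  · obtain ⟨hA, _, _, hI⟩ := block s hs hInv
    exact ⟨hA, hI.w⟩

lemma inv_base : Inv 0 id 0 :=
  ⟨fun x => le_refl x, fun _ h => h, fun _ _ => rfl, fun _ _ _ _ => rfl,
    rfl, le_refl 0, fun x h => by omega⟩

lemma cA_base : cA id 0 = 1 := by
  unfold cA
  refine Nat.card_eq_one_iff_unique.mpr
    ⟨⟨fun a b => Subtype.ext (Equiv.ext fun x => Fin.ext
      (by have h1 := (a.1 x).isLt; have h2 := (b.1 x).isLt; omega))⟩,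
      ⟨⟨Equiv.refl _, ?_⟩⟩⟩
  intro x y hxy hs
  have := x.isLt; have := y.isLt; omega

lemma cB_base : cB id 0 0 = 1 := by
  unfold cB
  refine Nat.card_eq_one_iff_unique.mpr
    ⟨⟨fun a b => Subtype.ext (Equiv.ext fun x => Fin.ext
      (by have h1 := (a.1 x).isLt; have h2 := (b.1 x).isLt; omega))⟩,
      ⟨⟨Equiv.refl _, ⟨?_, ?_⟩⟩⟩⟩
  · intro x y hxy hs
    have := x.isLt; have := y.isLt; omega
  · intro x hx
    simpa using hx

lemma sord_le (σ : ℕ → ℕ) (k : ℕ) (a b : Fin k) :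
    (sord σ k).le a b ↔ (a = b ∨ ((a:ℕ) < b ∧ σ a < b)) := Iff.rfl

lemma width_two {σ : ℕ → ℕ} {k : ℕ} (hw : ∀ x y, x < y → y < σ x → σ y = y)
    (A : Set (Fin k)) (hA : IsAntichain (sord σ k).le A) : A.ncard ≤ 2 := by
  by_contra hcon
  push_neg at hcon
  obtain ⟨B, hBA, hB⟩ := Set.exists_subset_card_eq (show 3 ≤ A.ncard from hcon)
  obtain ⟨x, y, z, hxy, hxz, hyz, hBeq⟩ := Set.ncard_eq_three.mp hB
  have hx : x ∈ A := hBA (by rw [hBeq]; simp)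
  have hy : y ∈ A := hBA (by rw [hBeq]; simp)
  have hz : z ∈ A := hBA (by rw [hBeq]; simp)
  have key : ∀ a b c : Fin k, a ∈ A → b ∈ A → c ∈ A → (a:ℕ) < b → (b:ℕ) < c → False := by
    intro a b c ha hb hc hab hbc
    have hac : (a:ℕ) < c := by omega
    have h1 : ¬ (sord σ k).le a c :=
      hA ha hc (by intro hh; rw [hh] at hac; exact absurd hac (lt_irrefl _))
    have h2 : ¬ (sord σ k).le b c :=
      hA hb hc (by intro hh; rw [hh] at hbc; exact absurd hbc (lt_irrefl _))
    rw [sord_le] at h1 h2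
    have hσa : ¬ (σ (a:ℕ) < c) := fun hh => h1 (Or.inr ⟨hac, hh⟩)
    have hσb : ¬ (σ (b:ℕ) < c) := fun hh => h2 (Or.inr ⟨hbc, hh⟩)
    have := hw a b hab (by omega)
    omega
  rcases Nat.lt_trichotomy (x:ℕ) (y:ℕ) with h1 | h1 | h1
  · rcases Nat.lt_trichotomy (y:ℕ) (z:ℕ) with h2 | h2 | h2
    · exact key x y z hx hy hz h1 h2
    · exact hyz (Fin.ext h2)
    · rcases Nat.lt_trichotomy (x:ℕ) (z:ℕ) with h3 | h3 | h3
      · exact key x z y hx hz hy h3 h2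
      · exact hxz (Fin.ext h3)
      · exact key z x y hz hx hy h3 h1
  · exact hxy (Fin.ext h1)
  · rcases Nat.lt_trichotomy (x:ℕ) (z:ℕ) with h2 | h2 | h2
    · exact key y x z hy hx hz h1 h2
    · exact hxz (Fin.ext h2)
    · rcases Nat.lt_trichotomy (y:ℕ) (z:ℕ) with h3 | h3 | h3
      · exact key y z x hy hz hx h3 h2
      · exact hyz (Fin.ext h3)
      · exact key z y x hz hy hx h3 h1

lemma extNum_sord (σ : ℕ → ℕ) (k : ℕ) :
    extNum (Fin k) (instO := sord σ k) = Nat.card {f : Fin k ≃ Fin k // IsExt σ f} := by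
  unfold extNum
  apply Nat.card_congr
  refine Equiv.subtypeEquiv
    (Equiv.equivCongr (Equiv.refl (Fin k)) (finCongr (Fintype.card_fin k))) ?_
  intro f
  constructor
  · intro hf x y hxy hs
    have h2 := hf x y (show sle σ x y from Or.inr ⟨hxy, hs⟩)
    rw [Fin.le_def] at h2 ⊢
    simpa only [Equiv.equivCongr_apply_apply, Equiv.refl_symm, Equiv.refl_apply,
      finCongr_apply, Fin.coe_cast] using h2
  · intro hf x y hxy
    have hxy' : sle σ x y := hxy
    rcases hxy' with rfl | ⟨h1, h2⟩
    · exact le_refl _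
    · have h3 := hf x y h1 h2
      rw [Fin.le_def] at h3 ⊢
      simpa only [Equiv.equivCongr_apply_apply, Equiv.refl_symm, Equiv.refl_apply,
        finCongr_apply, Fin.coe_cast] using h3

lemma euclid_pos : ∀ b a : ℕ, b ≤ a → ∀ q ∈ euclidQuotients a b, 1 ≤ q := by
  intro b
  induction b using Nat.strong_induction_on with
  | _ b ih =>
    intro a hba q hq
    match b, hba, hq with
    | 0, hba, hq => rw [euclidQuotients] at hq; simp at hq
    | b'+1, hba, hq =>
      rw [euclidQuotients] at hq
      rcases List.mem_cons.mp hq with rfl | hmem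
      · exact (Nat.one_le_div_iff (by omega)).mpr hba
      · exact ih (a % (b'+1)) (Nat.mod_lt _ (by omega)) (b'+1)
          (le_of_lt (Nat.mod_lt _ (by omega))) q hmem

lemma euclid_fold : ∀ v u : ℕ, 1 ≤ v → v ≤ u → Nat.gcd u v = 1 →
    ((euclidQuotients u v).reverse).foldl stepP (1,1) = (u + v, u) := by
  intro v
  induction v using Nat.strong_induction_on with
  | _ v ih =>
    intro u hv hvu hg
    match v, hv with
    | v'+1, _ =>
      rw [euclidQuotients, List.reverse_cons, List.foldl_append]
      rcases Nat.eq_zero_or_pos (u % (v'+1)) with hw | hw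
      · have hdvd : (v'+1) ∣ u := Nat.dvd_of_mod_eq_zero hw
        have hgv : Nat.gcd u (v'+1) = v'+1 := Nat.gcd_eq_right hdvd
        have hv1 : v' = 0 := by omega
        subst hv1
        rw [hw, euclidQuotients]
        simp only [List.reverse_nil, List.foldl_nil, List.foldl_cons]
        have hst : stepP (1,1) (u / (0+1)) = (1 + u/(0+1) * 1, 1 + (u/(0+1) - 1) * 1) := rfl
        rw [hst, Prod.mk.injEq]
        have hu : 1 ≤ u := hvu
        have hdiv : u / (0+1) = u := Nat.div_one u
        rw [hdiv]
        constructor <;> omega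
      · have hmd : u % (v'+1) + (u / (v'+1)) * (v'+1) = u := Nat.mod_add_div' u (v'+1)
        have hgr : Nat.gcd (v'+1) (u % (v'+1)) = 1 := by
          have h1 : Nat.gcd (v'+1) u = 1 := by rw [Nat.gcd_comm]; exact hg
          rw [Nat.gcd_rec] at h1
          rwa [Nat.gcd_comm]
        have hrec := ih (u % (v'+1)) (Nat.mod_lt _ (by omega)) (v'+1) hw
          (le_of_lt (Nat.mod_lt _ (by omega))) hgr
        rw [hrec]
        simp only [List.foldl_cons, List.foldl_nil]
        have hst : stepP (v'+1 + u % (v'+1), v'+1) (u/(v'+1))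
            = (v'+1 + u % (v'+1) + u/(v'+1) * (v'+1),
               v'+1 + u % (v'+1) + (u/(v'+1) - 1) * (v'+1)) := rfl
        rw [hst, Nat.sub_mul, one_mul, Prod.mk.injEq]
        have hq1 : 1 ≤ u/(v'+1) := (Nat.one_le_div_iff (by omega)).mpr hvu
        have hple : v'+1 ≤ (u/(v'+1)) * (v'+1) := Nat.le_mul_of_pos_left _ hq1
        have key : ∀ p w : ℕ, w + p = u → v'+1 ≤ p →
            (v'+1 + w + p = u + (v'+1)) ∧ (v'+1 + w + (p - (v'+1)) = u) := by
          intro p w h1 h2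
          omega
        exact key _ _ hmd hple

lemma quotSum_eq (n d : ℕ) (hd : 0 < d) :
    quotSum n d = n / d + (euclidQuotients d (n % d)).sum := by
  match d, hd with
  | d'+1, _ =>
    rw [quotSum, euclidQuotients, List.sum_cons]

end S3

/-- If `d < n` are relatively prime positive integers and `ℓ = s(n, d)`, then there is a
finite poset of width at most `2` with at most `ℓ` elements having exactly `n` linear
extensions. -/
theorem statement3 (n d : ℕ) (hd : 0 < d) (hdn : d < n) (h : Nat.gcd n d = 1) :
    ∃ k : ℕ, k ≤ quotSum n d ∧ ∃ r : PartialOrder (Fin k),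
      (∀ A : Set (Fin k), IsAntichain r.le A → A.ncard ≤ 2) ∧
      extNum (Fin k) (instO := r) = n := by
  classical
  set L := (euclidQuotients d (n % d)).reverse with hL
  have hLpos : ∀ s ∈ L, 1 ≤ s := by
    intro s hs
    rw [hL, List.mem_reverse] at hs
    exact S3.euclid_pos (n % d) d (le_of_lt (Nat.mod_lt _ hd)) s hs
  obtain ⟨σ₁, t₁, hInv₁, hA₁, hB₁⟩ := S3.fold_lemma L hLpos 0 0 id S3.inv_base
  rw [S3.cA_base, S3.cB_base] at hA₁ hB₁
  set s₀ := n / d - 1 with hs₀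
  have hq1 : 1 ≤ n / d := (Nat.one_le_div_iff hd).mpr (le_of_lt hdn)
  obtain ⟨hA₂, hW₂⟩ := S3.final_A hInv₁ s₀
  rw [hA₁, hB₁] at hA₂
  set m₂ := (0 + L.sum) + s₀ with hm₂
  set σ₂ := Function.update σ₁ t₁ ((0 + L.sum) + s₀) with hσ₂
  have hval : S3.cA σ₂ m₂ = n := by
    rw [hA₂]
    rcases Nat.lt_or_ge d 2 with hd2 | hd2
    · -- d = 1
      have hd1 : d = 1 := by omega
      subst hd1
      rw [hL, Nat.mod_one, euclidQuotients]
      simp only [List.reverse_nil, List.foldl_nil]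
      have hdiv : n / 1 = n := Nat.div_one n
      rw [hs₀, hdiv]
      have hn1 : 1 ≤ n := by omega
      show 1 + (n - 1) * 1 = n
      omega
    · have hmodpos : 0 < n % d := by
        rcases Nat.eq_zero_or_pos (n % d) with h0 | h0
        · exfalso
          have hdvd : d ∣ n := Nat.dvd_of_mod_eq_zero h0
          have := Nat.gcd_eq_right hdvd
          omega
        · exact h0
      have hgr : Nat.gcd d (n % d) = 1 := by
        have h1 : Nat.gcd d n = 1 := by rw [Nat.gcd_comm]; exact h
        rw [Nat.gcd_rec] at h1
        rwa [Nat.gcd_comm]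
      have hfold := S3.euclid_fold (n % d) d hmodpos (le_of_lt (Nat.mod_lt _ hd)) hgr
      rw [hL, hfold]
      show d + n % d + s₀ * d = n
      rw [hs₀, Nat.sub_mul, one_mul]
      have hmd : n % d + (n / d) * d = n := Nat.mod_add_div' n d
      have hple : d ≤ (n / d) * d := Nat.le_mul_of_pos_left _ hq1
      have key : ∀ p w : ℕ, w + p = n → d ≤ p → d + w + (p - d) = n := by
        intro p w h1 h2
        omega
      exact key _ _ hmd hple
  have hsize : m₂ + 1 = quotSum n d := by
    rw [hm₂, hL, List.sum_reverse, hs₀, S3.quotSum_eq n d hd]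
    have key : ∀ a q : ℕ, 1 ≤ q → 0 + a + (q - 1) + 1 = q + a := by
      intro a q hq
      omega
    exact key _ _ hq1
  refine ⟨m₂ + 1, le_of_eq hsize, S3.sord σ₂ (m₂ + 1), ?_, ?_⟩
  · intro A hA
    exact S3.width_two hW₂ A hA
  · rw [S3.extNum_sord]
    exact hval
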